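/- Let C be a small category and e an object of C such that C satisfies the left-Ore condition at e and is weakly left-cancellative at e. Let t, s : e ⟶ b and t', s' : e ⟶ b' be morphisms, and suppose f : b ⟶ d, f' : b' ⟶ d satisfy s ≫ f = t' ≫ f', and g : b ⟶ d₂, g' : b' ⟶ d₂ satisfy s ≫ g = t' ≫ g'. Then (t ≫ f, s' ≫ f') ~ (t ≫ g, s' ≫ g'); that is, the product of fractions (t/s)·(t'/s') := (t ≫ f)/(s' ≫ f') does not depend on the choice of f, f'. -/
import Mathlib


open CategoryTheory

universe v u

/-- Pairs of morphisms with source `e` and a common target. -/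
def Frac {C : Type u} [Category.{v} C] (e : C) : Type max u v :=
  Σ b : C, (e ⟶ b) × (e ⟶ b)

/-- The basic relation `(t, s) ∼ (t ≫ f, s ≫ f)` generating the equivalence
relation on fractions. -/
inductive FracRel {C : Type u} [Category.{v} C] (e : C) : Frac e → Frac e → Prop
  | mk {b d : C} (t s : e ⟶ b) (f : b ⟶ d) :
      FracRel e ⟨b, (t, s)⟩ ⟨d, (t ≫ f, s ≫ f)⟩

/-- Let `C` be a small category satisfying the left-Ore condition at `e` and
weakly left-cancellative at `e`. Let `t, s : e ⟶ b`, `t', s' : e ⟶ b'`, and suppose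
`f : b ⟶ d`, `f' : b' ⟶ d` satisfy `s ≫ f = t' ≫ f'`, and `g : b ⟶ d₂`, `g' : b' ⟶ d₂`
satisfy `s ≫ g = t' ≫ g'`. Then `(t ≫ f, s' ≫ f') ∼ (t ≫ g, s' ≫ g')` in the
equivalence relation generated by `FracRel`; i.e. the product of fractions is
independent of choices. -/
theorem stmt1 {C : Type u} [Category.{v} C] (e : C)
    (hOre : ∀ {b c : C} (p : e ⟶ b) (q : e ⟶ c),
      ∃ (d : C) (h : b ⟶ d) (k : c ⟶ d), p ≫ h = q ≫ k)
    (hCancel : ∀ {b c : C} (f : e ⟶ b) (p q : b ⟶ c), f ≫ p = f ≫ q →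
      ∃ (d : C) (g : c ⟶ d), p ≫ g = q ≫ g)
    {b b' d d₂ : C} (t s : e ⟶ b) (t' s' : e ⟶ b')
    (f : b ⟶ d) (f' : b' ⟶ d) (hf : s ≫ f = t' ≫ f')
    (g : b ⟶ d₂) (g' : b' ⟶ d₂) (hg : s ≫ g = t' ≫ g') :
    Relation.EqvGen (FracRel e) ⟨d, (t ≫ f, s' ≫ f')⟩ ⟨d₂, (t ≫ g, s' ≫ g')⟩ := by
  obtain ⟨d₃, h, k, hhk⟩ := hOre (s ≫ f) (s ≫ g)
  obtain ⟨d₄, u, hu⟩ := hCancel s (f ≫ h) (g ≫ k)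
    (by simpa [Category.assoc] using hhk)
  have ht' : t' ≫ (f' ≫ h ≫ u) = t' ≫ (g' ≫ k ≫ u) := by
    have h1 : s ≫ f ≫ h ≫ u = s ≫ g ≫ k ≫ u := by
      have := congrArg (s ≫ ·) hu
      simpa [Category.assoc] using this
    calc t' ≫ (f' ≫ h ≫ u) = (t' ≫ f') ≫ h ≫ u := by simp
      _ = (s ≫ f) ≫ h ≫ u := by rw [hf]
      _ = (s ≫ g) ≫ k ≫ u := by simpa [Category.assoc] using h1
      _ = (t' ≫ g') ≫ k ≫ u := by rw [hg]
      _ = t' ≫ (g' ≫ k ≫ u) := by simp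
  obtain ⟨d₅, v, hv⟩ := hCancel t' _ _ ht'
  have step1 : FracRel e ⟨d, (t ≫ f, s' ≫ f')⟩
      ⟨d₅, ((t ≫ f) ≫ h ≫ u ≫ v, (s' ≫ f') ≫ h ≫ u ≫ v)⟩ :=
    FracRel.mk _ _ _
  have step2 : FracRel e ⟨d₂, (t ≫ g, s' ≫ g')⟩
      ⟨d₅, ((t ≫ g) ≫ k ≫ u ≫ v, (s' ≫ g') ≫ k ≫ u ≫ v)⟩ :=
    FracRel.mk _ _ _
  have key1 : (t ≫ f) ≫ h ≫ u ≫ v = (t ≫ g) ≫ k ≫ u ≫ v := by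
    have := congrArg (fun z => t ≫ z ≫ v) hu
    simpa [Category.assoc] using this
  have key2 : (s' ≫ f') ≫ h ≫ u ≫ v = (s' ≫ g') ≫ k ≫ u ≫ v := by
    have := congrArg (s' ≫ ·) hv
    simpa [Category.assoc] using this
  refine Relation.EqvGen.trans _ _ _ (Relation.EqvGen.rel _ _ step1) ?_
  rw [key1, key2]
  exact Relation.EqvGen.symm _ _ (Relation.EqvGen.rel _ _ step2)
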